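/- For every sequence {A(k)}_{k∈ℕ} of n×n row-stochastic real matrices there exists a sequence of stochastic vectors {π(k)}_{k∈ℕ} in ℝ^n such that π(k+1)ᵀ A(k) = π(k)ᵀ for all k ∈ ℕ (an absolute probability sequence of {A(k)}). -/
import Mathlib

open Filter Matrix Topology

/-- Backward products: `apsAux n A j k` is the uniform vector multiplied backward
through `A (k+j-1), …, A k`. -/
noncomputable def apsAux (n : ℕ) (A : ℕ → Matrix (Fin n) (Fin n) ℝ) : ℕ → ℕ → Fin n → ℝ
  | 0, _ => fun _ => (n : ℝ)⁻¹
  | j + 1, k => Matrix.vecMul (apsAux n A j (k + 1)) (A k)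

lemma apsAux_nonneg (n : ℕ) (A : ℕ → Matrix (Fin n) (Fin n) ℝ)
    (hnonneg : ∀ k i j, 0 ≤ A k i j) :
    ∀ j k i, 0 ≤ apsAux n A j k i := by
  intro j
  induction j with
  | zero => intro k i; simp [apsAux]
  | succ j ih =>
    intro k i
    simp only [apsAux, Matrix.vecMul, dotProduct]
    exact Finset.sum_nonneg fun l _ => mul_nonneg (ih (k + 1) l) (hnonneg k l i)

lemma apsAux_sum (n : ℕ) (hn : 0 < n) (A : ℕ → Matrix (Fin n) (Fin n) ℝ)
    (hrow : ∀ k i, ∑ j, A k i j = 1) :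
    ∀ j k, ∑ i, apsAux n A j k i = 1 := by
  intro j
  induction j with
  | zero =>
    intro k
    simp [apsAux, Finset.sum_const]
    field_simp
  | succ j ih =>
    intro k
    simp only [apsAux, Matrix.vecMul, dotProduct]
    rw [Finset.sum_comm]
    calc ∑ l, ∑ i, apsAux n A j (k + 1) l * A k l i
        = ∑ l, apsAux n A j (k + 1) l * ∑ i, A k l i := by
          simp [Finset.mul_sum]
      _ = 1 := by simp [hrow k, ih (k + 1)]

theorem exists_absolute_probability_sequence (n : ℕ) (hn : 0 < n)
    (A : ℕ → Matrix (Fin n) (Fin n) ℝ)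
    (hnonneg : ∀ k i j, 0 ≤ A k i j)
    (hrow : ∀ k i, ∑ j, A k i j = 1) :
    ∃ π : ℕ → Fin n → ℝ,
      (∀ k i, 0 ≤ π k i) ∧ (∀ k, ∑ i, π k i = 1) ∧
      (∀ k, Matrix.vecMul (π (k + 1)) (A k) = π k) := by
  classical
  have gpos := apsAux_nonneg n A hnonneg
  have gsum := apsAux_sum n hn A hrow
  have gle : ∀ j k i, apsAux n A j k i ≤ 1 := by
    intro j k i
    calc apsAux n A j k i ≤ ∑ i', apsAux n A j k i' :=
          Finset.single_le_sum (fun i' _ => gpos j k i') (Finset.mem_univ i)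
      _ = 1 := gsum j k
  -- ultrafilter extending atTop
  let U : Ultrafilter ℕ := Ultrafilter.of atTop
  have hU : (U : Filter ℕ) ≤ atTop := Ultrafilter.of_le _
  -- existence of limits along U
  have key : ∀ k i, ∃ x : ℝ, x ∈ Set.Icc (0 : ℝ) 1 ∧
      Tendsto (fun m => apsAux n A (m - k) k i) U (𝓝 x) := by
    intro k i
    have hmem : Set.Icc (0 : ℝ) 1 ∈ Ultrafilter.map (fun m => apsAux n A (m - k) k i) U := by
      apply Filter.mem_map.2
      filter_upwards with m
      exact ⟨gpos _ _ _, gle _ _ _⟩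
    obtain ⟨x, hx, hle⟩ := isCompact_Icc.ultrafilter_le_nhds _ (Filter.le_principal_iff.2 hmem)
    exact ⟨x, hx, hle⟩
  choose L hL1 hL2 using key
  refine ⟨L, fun k i => (hL1 k i).1, ?_, ?_⟩
  · intro k
    have h1 : Tendsto (fun m => ∑ i, apsAux n A (m - k) k i) U (𝓝 (∑ i, L k i)) :=
      tendsto_finset_sum _ fun i _ => hL2 k i
    have h2 : Tendsto (fun m => ∑ i, apsAux n A (m - k) k i) U (𝓝 1) := by
      simp only [gsum]
      exact tendsto_const_nhds
    exact tendsto_nhds_unique h1 h2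
  · intro k
    funext i
    have h1 : Tendsto (fun m => ∑ j, apsAux n A (m - (k + 1)) (k + 1) j * A k j i) U
        (𝓝 (∑ j, L (k + 1) j * A k j i)) :=
      tendsto_finset_sum _ fun j _ => (hL2 (k + 1) j).mul_const _
    have heq : (fun m => ∑ j, apsAux n A (m - (k + 1)) (k + 1) j * A k j i)
        =ᶠ[(U : Filter ℕ)] (fun m => apsAux n A (m - k) k i) := by
      have : ∀ᶠ m in (U : Filter ℕ), k + 1 ≤ m := hU (eventually_ge_atTop (k + 1))
      filter_upwards [this] with m hm
      have hmk : m - k = (m - (k + 1)) + 1 := by omega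
      rw [hmk]
      simp [apsAux, Matrix.vecMul, dotProduct]
    have h2 : Tendsto (fun m => apsAux n A (m - k) k i) U (𝓝 (∑ j, L (k + 1) j * A k j i)) :=
      h1.congr' heq
    have := tendsto_nhds_unique h2 (hL2 k i)
    simpa [Matrix.vecMul, dotProduct] using this
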